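/- Let f_i : ℝⁿ → ℝ, i = 1, …, m, be quasi-convex, upper semicontinuous, and 0-lower semicontinuous functions, each satisfying property (sHöl) on S^{f_i}_{≤,0} with order δ_i > 0 and modulus L_i > 0, and suppose ⋂_{i=1}^m S^{f_i}_{<,0} ≠ ∅. For each i let c_i : ℝⁿ → ℝⁿ be a selection with c_i(x) ∈ ∂*f_i(x) \ {0} whenever f_i(x) > 0, and let P_{f_i} be the associated star subgradient projections. Then for any starting point x₁ ∈ ℝⁿ, the sequence generated by the cyclic star subgradient projection method, x_{k+1} := P_{f_m}(P_{f_{m−1}}(⋯ P_{f_2}(P_{f_1}(x_k)) ⋯)), converges to a point x* ∈ ⋂_{i=1}^m S^{f_i}_{≤,0}, i.e., to a solution of the quasi-convex feasibility problem. -/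

import Mathlib

/-- The star subdifferential of `f` at `x`. -/
def starSubdiff {n : ℕ} (f : EuclideanSpace ℝ (Fin n) → ℝ) (x : EuclideanSpace ℝ (Fin n)) :
    Set (EuclideanSpace ℝ (Fin n)) :=
  {g | ∀ y : EuclideanSpace ℝ (Fin n), f y < f x → (inner ℝ g (y - x) : ℝ) ≤ 0}

/-- The star subgradient projection relative to `f`, with modulus `L`, order `δ` and
star subgradient selection `c`. -/
noncomputable def starProj {n : ℕ} (f : EuclideanSpace ℝ (Fin n) → ℝ) (L δ : ℝ)
    (c : EuclideanSpace ℝ (Fin n) → EuclideanSpace ℝ (Fin n)) (x : EuclideanSpace ℝ (Fin n)) :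
    EuclideanSpace ℝ (Fin n) :=
  if 0 < f x then x - ((max (f x) 0 / L) ^ (1 / δ)) • (‖c x‖⁻¹ • c x) else x

/-- The composition `T_m ∘ T_{m-1} ∘ ⋯ ∘ T_1` of a finite family of operators
(`T 0` is applied first, `T (m-1)` last). -/
def compFamily {n m : ℕ}
    (T : Fin m → (EuclideanSpace ℝ (Fin n) → EuclideanSpace ℝ (Fin n))) :
    EuclideanSpace ℝ (Fin n) → EuclideanSpace ℝ (Fin n) :=
  fun x => (List.ofFn T).foldl (fun y g => g y) x

/-- Iteration of a time-dependent family of maps. -/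
def seqOfAux {α : Type*} (g : ℕ → α → α) (a : α) : ℕ → α
  | 0 => a
  | (j + 1) => g j (seqOfAux g a j)

theorem seqOfAux_congr {α : Type*} (g g' : ℕ → α → α) (a : α) :
    ∀ r : ℕ, (∀ j < r, g j = g' j) → seqOfAux g a r = seqOfAux g' a r := by
  intro r
  induction r with
  | zero => intro _; rfl
  | succ r ih =>
    intro h
    show g r (seqOfAux g a r) = g' r (seqOfAux g' a r)
    rw [ih (fun j hj => h j (hj.trans (Nat.lt_succ_self r))), h r (Nat.lt_succ_self r)]

theorem seqOfAux_dite_eq_compFamily {n : ℕ} :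
    ∀ (M : ℕ) (T : Fin M → (EuclideanSpace ℝ (Fin n) → EuclideanSpace ℝ (Fin n)))
      (b : EuclideanSpace ℝ (Fin n)),
      seqOfAux (fun j v => if h : j < M then T ⟨j, h⟩ v else v) b M = compFamily T b := by
  intro M
  induction M with
  | zero => intro T b; simp [compFamily, seqOfAux]
  | succ M ih =>
    intro T b
    have h1 : seqOfAux (fun j v => if h : j < M + 1 then T ⟨j, h⟩ v else v) b (M + 1)
        = T ⟨M, Nat.lt_succ_self M⟩
          (seqOfAux (fun j v => if h : j < M + 1 then T ⟨j, h⟩ v else v) b M) := by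
      show (if h : M < M + 1 then T ⟨M, h⟩ _ else _) = _
      rw [dif_pos (Nat.lt_succ_self M)]
    rw [h1]
    have h2 : seqOfAux (fun j v => if h : j < M + 1 then T ⟨j, h⟩ v else v) b M
        = seqOfAux (fun j v => if h : j < M then T (Fin.castSucc ⟨j, h⟩) v else v) b M := by
      apply seqOfAux_congr
      intro j hj
      funext v
      rw [dif_pos (hj.trans (Nat.lt_succ_self M)), dif_pos hj]
      rfl
    rw [h2, ih (fun i => T (Fin.castSucc i)) b]
    show _ = (List.ofFn T).foldl (fun y g => g y) b
    rw [List.ofFn_succ']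
    rw [List.concat_eq_append, List.foldl_append]
    rfl

/-- The key one-step inequality for the star subgradient projection. -/
theorem starProj_step {n : ℕ} (f : EuclideanSpace ℝ (Fin n) → ℝ) (δ L : ℝ)
    (hδ : 0 < δ) (hL : 0 < L)
    (c : EuclideanSpace ℝ (Fin n) → EuclideanSpace ℝ (Fin n))
    (hc : ∀ x, 0 < f x → c x ∈ starSubdiff f x ∧ c x ≠ 0)
    (hhol : ∀ q x' : EuclideanSpace ℝ (Fin n), f q ≤ 0 → |f x' - f q| ≤ L * ‖x' - q‖ ^ δ)
    (z : EuclideanSpace ℝ (Fin n)) (ρ : ℝ) (hρ : 0 < ρ)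
    (hball : ∀ v : EuclideanSpace ℝ (Fin n), ‖v - z‖ ≤ ρ → f v < 0)
    (a : EuclideanSpace ℝ (Fin n)) :
    ‖starProj f L δ c a - z‖ ^ 2 + 2 * ρ * ‖starProj f L δ c a - a‖ ≤ ‖a - z‖ ^ 2 ∧
      f a ≤ L * ‖starProj f L δ c a - a‖ ^ δ := by
  by_cases hfa : 0 < f a
  · obtain ⟨hstar, hcne⟩ := hc a hfa
    set cx := c a with hcx
    set gu : EuclideanSpace ℝ (Fin n) := ‖cx‖⁻¹ • cx with hgudef
    have hgu : ‖gu‖ = 1 := by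
      rw [hgudef, norm_smul, norm_inv, norm_norm]
      exact inv_mul_cancel₀ (norm_ne_zero_iff.mpr hcne)
    set t : ℝ := (f a / L) ^ (1 / δ) with htdef
    have htpos : 0 < t := Real.rpow_pos_of_pos (div_pos hfa hL) _
    have hb : starProj f L δ c a = a - t • gu := by
      rw [starProj, if_pos hfa, max_eq_left hfa.le]
    have hba : starProj f L δ c a - a = -(t • gu) := by rw [hb]; abel
    have hban : ‖starProj f L δ c a - a‖ = t := by
      rw [hba, norm_neg, norm_smul, hgu, mul_one, Real.norm_eq_abs, abs_of_pos htpos]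
    have hLt : L * t ^ δ = f a := by
      rw [htdef, ← Real.rpow_mul (div_nonneg hfa.le hL.le), one_div,
        inv_mul_cancel₀ hδ.ne', Real.rpow_one, mul_comm, div_mul_cancel₀ _ hL.ne']
    -- the Hölder/star-subdifferential estimate
    have hqz : ‖(z + ρ • gu) - z‖ ≤ ρ := by
      rw [add_sub_cancel_left, norm_smul, hgu, mul_one, Real.norm_eq_abs, abs_of_pos hρ]
    have hq : f (z + ρ • gu) < 0 := hball _ hqz
    have hy0 : f (z + (ρ + t) • gu) < f a := by
      have h1 := hhol (z + ρ • gu) (z + (ρ + t) • gu) hq.le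
      have h2 : (z + (ρ + t) • gu) - (z + ρ • gu) = t • gu := by
        rw [add_smul]; abel
      rw [h2, norm_smul, hgu, mul_one, Real.norm_eq_abs, abs_of_pos htpos] at h1
      have h3 := (abs_le.mp h1).2
      linarith [hLt]
    have hsi : (inner ℝ cx ((z + (ρ + t) • gu) - a) : ℝ) ≤ 0 := hstar _ hy0
    have hsi' : (inner ℝ gu ((z + (ρ + t) • gu) - a) : ℝ) ≤ 0 := by
      rw [hgudef, real_inner_smul_left]
      exact mul_nonpos_of_nonneg_of_nonpos (inv_nonneg.mpr (norm_nonneg _)) hsi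
    have hkey : ρ + t ≤ (inner ℝ gu (a - z) : ℝ) := by
      have h4 : (z + (ρ + t) • gu) - a = (z - a) + (ρ + t) • gu := by abel
      rw [h4, inner_add_right, real_inner_smul_right, real_inner_self_eq_norm_sq, hgu] at hsi'
      have h5 : (inner ℝ gu (a - z) : ℝ) = -(inner ℝ gu (z - a) : ℝ) := by
        rw [← inner_neg_right, neg_sub]
      rw [h5]; nlinarith
    -- expand the norm
    have hexp : ‖starProj f L δ c a - z‖ ^ 2
        = ‖a - z‖ ^ 2 - 2 * (t * (inner ℝ (a - z) gu : ℝ)) + t ^ 2 := by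
      have h6 : starProj f L δ c a - z = (a - z) - t • gu := by rw [hb]; abel
      rw [h6, norm_sub_sq_real, real_inner_smul_right,
        norm_smul, hgu, mul_one, Real.norm_eq_abs, abs_of_pos htpos]
    constructor
    · rw [hexp, hban, real_inner_comm]
      nlinarith [hkey, htpos.le]
    · rw [hban, hLt]
  · have hb : starProj f L δ c a = a := by rw [starProj, if_neg hfa]
    constructor
    · rw [hb]; simp
    · rw [hb]
      simp only [sub_self, norm_zero]
      rw [Real.zero_rpow hδ.ne', mul_zero]
      exact le_of_not_gt hfa

/-- Convergence of the cyclic star subgradient projection method for the quasi-convex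
feasibility problem: if each `f i` is quasi-convex, upper semicontinuous,
`0`-lower semicontinuous and satisfies property (sHöl) with order `δ i > 0` and modulus
`L i > 0`, and the intersection of the strict zero sublevel sets is nonempty, then the
cyclic iterates converge to a point of `⋂ i, S^{f_i}_{≤,0}`. -/
theorem cyclic_starProj_tendsto_solution {n m : ℕ} (hm : 0 < m)
    (f : Fin m → EuclideanSpace ℝ (Fin n) → ℝ) (δ L : Fin m → ℝ)
    (hδ : ∀ i, 0 < δ i) (hL : ∀ i, 0 < L i)
    (hqc : ∀ i, ∀ lam : ℝ, Convex ℝ {y : EuclideanSpace ℝ (Fin n) | f i y ≤ lam})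
    (husc : ∀ i, ∀ lam : ℝ, IsOpen {y : EuclideanSpace ℝ (Fin n) | f i y < lam})
    (hlsc0 : ∀ i, IsClosed {y : EuclideanSpace ℝ (Fin n) | f i y ≤ 0})
    (hhol : ∀ i, ∀ q x' : EuclideanSpace ℝ (Fin n),
      f i q ≤ 0 → |f i x' - f i q| ≤ L i * ‖x' - q‖ ^ (δ i))
    (hne : ∃ z : EuclideanSpace ℝ (Fin n), ∀ i, f i z < 0)
    (c : Fin m → EuclideanSpace ℝ (Fin n) → EuclideanSpace ℝ (Fin n))
    (hc : ∀ i, ∀ x, 0 < f i x → c i x ∈ starSubdiff (f i) x ∧ c i x ≠ 0)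
    (x : ℕ → EuclideanSpace ℝ (Fin n))
    (hx : ∀ k : ℕ, x (k + 1) = compFamily (fun i => starProj (f i) (L i) (δ i) (c i)) (x k)) :
    ∃ xstar : EuclideanSpace ℝ (Fin n), (∀ i, f i xstar ≤ 0) ∧
      Filter.Tendsto x Filter.atTop (nhds xstar) := by
  classical
  obtain ⟨z, hz⟩ := hne
  -- a closed ball around the Slater point inside all strict sublevel sets
  have hUopen : IsOpen {y : EuclideanSpace ℝ (Fin n) | ∀ i, f i y < 0} := by
    have hU : {y : EuclideanSpace ℝ (Fin n) | ∀ i, f i y < 0}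
        = ⋂ i, {y : EuclideanSpace ℝ (Fin n) | f i y < 0} := by
      ext v; simp
    rw [hU]
    exact isOpen_iInter_of_finite fun i => husc i 0
  obtain ⟨ε, hε, hballε⟩ := Metric.isOpen_iff.mp hUopen z hz
  set ρ : ℝ := ε / 2 with hρdef
  have hρ : 0 < ρ := by positivity
  have hballρ : ∀ v : EuclideanSpace ℝ (Fin n), ‖v - z‖ ≤ ρ → ∀ i, f i v < 0 := by
    intro v hv
    exact hballε (show v ∈ Metric.ball z ε by
      rw [Metric.mem_ball, dist_eq_norm]; linarith)
  -- the flattened sequence of sub-iterates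
  set T : Fin m → (EuclideanSpace ℝ (Fin n) → EuclideanSpace ℝ (Fin n)) :=
    fun i => starProj (f i) (L i) (δ i) (c i) with hTdef
  set g : ℕ → (EuclideanSpace ℝ (Fin n) → EuclideanSpace ℝ (Fin n)) :=
    fun j v => T ⟨j % m, Nat.mod_lt j hm⟩ v with hgdef
  set y : ℕ → EuclideanSpace ℝ (Fin n) := seqOfAux g (x 0) with hydef
  -- one-step inequality
  have hstep : ∀ j : ℕ,
      ‖y (j + 1) - z‖ ^ 2 + 2 * ρ * ‖y (j + 1) - y j‖ ≤ ‖y j - z‖ ^ 2 ∧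
      f ⟨j % m, Nat.mod_lt j hm⟩ (y j)
        ≤ L ⟨j % m, Nat.mod_lt j hm⟩ * ‖y (j + 1) - y j‖ ^ δ ⟨j % m, Nat.mod_lt j hm⟩ := by
    intro j
    set i : Fin m := ⟨j % m, Nat.mod_lt j hm⟩ with hidef
    have hy1 : y (j + 1) = starProj (f i) (L i) (δ i) (c i) (y j) := rfl
    rw [hy1]
    exact starProj_step (f i) (δ i) (L i) (hδ i) (hL i) (c i) (hc i) (hhol i) z ρ hρ
      (fun v hv => hballρ v hv i) (y j)
  -- summability of the steps
  have hs_nonneg : ∀ j : ℕ, 0 ≤ ‖y (j + 1) - y j‖ := fun _ => norm_nonneg _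
  have hsum_aux : ∀ N : ℕ,
      2 * ρ * ∑ j ∈ Finset.range N, ‖y (j + 1) - y j‖ + ‖y N - z‖ ^ 2 ≤ ‖y 0 - z‖ ^ 2 := by
    intro N
    induction N with
    | zero => simp
    | succ N ih =>
      rw [Finset.sum_range_succ, mul_add]
      have := (hstep N).1
      linarith
  have hsum_le : ∀ N : ℕ,
      ∑ j ∈ Finset.range N, ‖y (j + 1) - y j‖ ≤ ‖y 0 - z‖ ^ 2 / (2 * ρ) := by
    intro N
    rw [le_div_iff₀ (by positivity)]
    have h1 := hsum_aux N
    nlinarith [sq_nonneg ‖y N - z‖]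
  have hsum : Summable (fun j => ‖y (j + 1) - y j‖) :=
    summable_of_sum_range_le hs_nonneg hsum_le
  have hcauchy : CauchySeq y := by
    apply cauchySeq_of_summable_dist
    have heq : (fun j : ℕ => dist (y j) (y (j + 1))) = fun j => ‖y (j + 1) - y j‖ := by
      funext j; rw [dist_eq_norm, norm_sub_rev]
    exact heq ▸ hsum
  obtain ⟨xs, hxs⟩ := cauchySeq_tendsto_of_complete hcauchy
  -- the flattened sequence at multiples of m is x
  have hiter : ∀ k : ℕ, y (k * m) = x k := by
    intro k
    induction k with
    | zero => rw [Nat.zero_mul]; rfl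
    | succ k ih =>
      have hchunk : ∀ r : ℕ, r ≤ m →
          y (k * m + r) = seqOfAux (fun j v => if h : j < m then T ⟨j, h⟩ v else v) (x k) r := by
        intro r
        induction r with
        | zero => intro _; simpa [seqOfAux] using ih
        | succ r ihr =>
          intro hr
          have hrm : r < m := hr
          have h1 : y (k * m + (r + 1)) = g (k * m + r) (y (k * m + r)) := rfl
          rw [h1, ihr hrm.le]
          have hmod : (k * m + r) % m = r := by
            rw [Nat.add_comm, Nat.add_mul_mod_self_right, Nat.mod_eq_of_lt hrm]
          show T ⟨(k * m + r) % m, _⟩ _ = (if h : r < m then T ⟨r, h⟩ _ else _)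
          rw [dif_pos hrm]
          exact congrFun (congrArg T (Fin.ext hmod)) _
      have h2 := hchunk m le_rfl
      rw [seqOfAux_dite_eq_compFamily] at h2
      rw [Nat.succ_mul, h2, hx k]
  -- convergence of x
  have hxt : Filter.Tendsto x Filter.atTop (nhds xs) := by
    have h1 : Filter.Tendsto (fun k : ℕ => k * m) Filter.atTop Filter.atTop :=
      Filter.tendsto_atTop_mono (fun k => Nat.le_mul_of_pos_right k hm) Filter.tendsto_id
    have h2 := hxs.comp h1
    refine h2.congr fun k => ?_
    exact hiter k
  refine ⟨xs, fun i => ?_, hxt⟩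
  -- feasibility of the limit for each i
  set u : ℕ → EuclideanSpace ℝ (Fin n) := fun k => y (k * m + i.val) with hudef
  have hui : Filter.Tendsto u Filter.atTop (nhds xs) := by
    have h1 : Filter.Tendsto (fun k : ℕ => k * m + i.val) Filter.atTop Filter.atTop :=
      Filter.tendsto_atTop_mono
        (fun k => le_trans (Nat.le_mul_of_pos_right k hm) (Nat.le_add_right _ _))
        Filter.tendsto_id
    exact hxs.comp h1
  set μ : ℕ → ℝ := fun k => L i * ‖y (k * m + i.val + 1) - y (k * m + i.val)‖ ^ δ i with hμdef
  have hμ_nonneg : ∀ k, 0 ≤ μ k := by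
    intro k
    exact mul_nonneg (hL i).le (Real.rpow_nonneg (norm_nonneg _) _)
  have hfu : ∀ k, f i (u k) ≤ μ k := by
    intro k
    have h := (hstep (k * m + i.val)).2
    have hmod : (k * m + i.val) % m = i.val := by
      rw [Nat.add_comm, Nat.add_mul_mod_self_right, Nat.mod_eq_of_lt i.isLt]
    have hfin : (⟨(k * m + i.val) % m, Nat.mod_lt _ hm⟩ : Fin m) = i :=
      Fin.ext hmod
    rw [hfin] at h
    exact h
  have hμ0 : Filter.Tendsto μ Filter.atTop (nhds 0) := by
    have ht0 : Filter.Tendsto (fun k : ℕ => ‖y (k * m + i.val + 1) - y (k * m + i.val)‖)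
        Filter.atTop (nhds 0) := by
      have hs0 := hsum.tendsto_atTop_zero
      have h1 : Filter.Tendsto (fun k : ℕ => k * m + i.val) Filter.atTop Filter.atTop :=
        Filter.tendsto_atTop_mono
          (fun k => le_trans (Nat.le_mul_of_pos_right k hm) (Nat.le_add_right _ _))
          Filter.tendsto_id
      exact hs0.comp h1
    have hcont := (Real.continuousAt_rpow_const 0 (δ i) (Or.inr (hδ i).le)).tendsto
    have h2 := hcont.comp ht0
    rw [Real.zero_rpow (hδ i).ne'] at h2
    have h3 := h2.const_mul (L i)
    rw [mul_zero] at h3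
    exact h3
  -- segment points are feasible
  have hseg : ∀ s : ℝ, 0 ≤ s → s < 1 → f i (z + s • (xs - z)) ≤ 0 := by
    intro s hs0 hs1
    rcases eq_or_lt_of_le hs0 with h0 | hspos
    · rw [← h0, zero_smul, add_zero]
      exact (hz i).le
    · have hρs : 0 < ρ * (1 - s) / s := by
        have : 0 < 1 - s := by linarith
        positivity
      have hev1 : ∀ᶠ k in Filter.atTop, ‖xs - u k‖ ≤ ρ * (1 - s) / s := by
        obtain ⟨N, hN⟩ := Metric.tendsto_atTop.mp hui (ρ * (1 - s) / s) hρs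
        rw [Filter.eventually_atTop]
        refine ⟨N, fun k hk => ?_⟩
        have := hN k hk
        rw [dist_eq_norm, norm_sub_rev] at this
        exact this.le
      have key : ∀ᶠ k in Filter.atTop, f i (z + s • (xs - z)) ≤ μ k := by
        filter_upwards [hev1] with k hk
        have h1spos : (0 : ℝ) < 1 - s := by linarith
        have h1s : (1 : ℝ) - s ≠ 0 := h1spos.ne'
        have hzk_ball : ‖(z + (s / (1 - s)) • (xs - u k)) - z‖ ≤ ρ := by
          rw [add_sub_cancel_left, norm_smul, Real.norm_eq_abs,
            abs_of_nonneg (div_nonneg hspos.le h1spos.le)]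
          calc s / (1 - s) * ‖xs - u k‖ ≤ s / (1 - s) * (ρ * (1 - s) / s) :=
                mul_le_mul_of_nonneg_left hk (div_nonneg hspos.le h1spos.le)
            _ = ρ := by field_simp
        have hzk : f i (z + (s / (1 - s)) • (xs - u k)) ≤ μ k :=
          le_trans (hballρ _ hzk_ball i).le (hμ_nonneg k)
        have hconv := hqc i (μ k)
        have hcc := hconv hzk (hfu k) (by linarith : (0:ℝ) ≤ 1 - s) hs0
          (by ring : (1 - s) + s = 1)
        have heq : (1 - s) • (z + (s / (1 - s)) • (xs - u k)) + s • (u k)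
            = z + s • (xs - z) := by
          rw [smul_add, smul_smul,
            show (1 - s) * (s / (1 - s)) = s from by field_simp]
          rw [smul_sub, smul_sub, sub_smul, one_smul]
          abel
        rw [heq] at hcc
        exact hcc
      exact ge_of_tendsto hμ0 key
  -- take the limit along the segment
  have hmem : ∀ j : ℕ, z + (1 - 1 / (j + 1 : ℝ)) • (xs - z)
      ∈ {v : EuclideanSpace ℝ (Fin n) | f i v ≤ 0} := by
    intro j
    have hj1 : (0:ℝ) < (j:ℝ) + 1 := by positivity
    have h1 : 1 / ((j:ℝ) + 1) ≤ 1 := by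
      rw [div_le_one hj1]; linarith [Nat.cast_nonneg (α := ℝ) j]
    have h2 : 0 < 1 / ((j:ℝ) + 1) := by positivity
    exact hseg _ (by linarith) (by linarith)
  have hptend : Filter.Tendsto (fun j : ℕ => z + (1 - 1 / (j + 1 : ℝ)) • (xs - z))
      Filter.atTop (nhds xs) := by
    have h1 : Filter.Tendsto (fun j : ℕ => 1 - 1 / (j + 1 : ℝ)) Filter.atTop (nhds 1) := by
      have h2 := Filter.Tendsto.const_sub (1:ℝ) tendsto_one_div_add_atTop_nhds_zero_nat
      simpa using h2
    have h3 := (h1.smul_const (xs - z)).const_add z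
    have h4 : z + (1:ℝ) • (xs - z) = xs := by rw [one_smul]; abel
    rw [h4] at h3
    exact h3
  exact (hlsc0 i).mem_of_tendsto hptend (Filter.Eventually.of_forall hmem)
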